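/- (Linear choice of Borel representatives on Polish spaces.) Let (X,d) be a complete separable metric space and m a σ-finite Borel measure on X. Then there exist maps Leb, assigning to each m-locally integrable Borel function f : X → ℝ a Borel set Leb(f) ⊆ X, and BorRep, assigning to each such f a Borel function BorRep(f) : X → ℝ, with the following properties: (0) if f = g m-a.e. then Leb(f) = Leb(g) and BorRep(f) = BorRep(g); (i) m(X ∖ Leb(f)) = 0; (ii) BorRep(f) = f m-a.e.; (iii) for locally integrable f, g and α, β ∈ ℝ one has Leb(f) ∩ Leb(g) ⊆ Leb(αf + βg) and BorRep(αf + βg)(x) = α BorRep(f)(x) + β BorRep(g)(x) for every x ∈ Leb(f) ∩ Leb(g); (iv) for every x ∈ Leb(f) one has |BorRep(f)(x)| ≤ inf_{r>0} ‖f‖_{L^∞(m restricted to B_r(x))}, where B_r(x) is the open metric ball and ‖·‖_{L^∞} denotes the m-essential supremum (possibly +∞). -/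

import Mathlib

open Filter Topology MeasureTheory ENNReal

noncomputable section

namespace Statement19Aux

open TopologicalSpace Set MeasurableSpace

set_option linter.unusedSectionVars false

variable {X : Type*} [MetricSpace X] [TopologicalSpace.SeparableSpace X]
  [MeasurableSpace X] [BorelSpace X] [Nonempty X]

/-- shrinking radii -/
def ρ (n : ℕ) : ℝ := 1 / (n + 1)

lemma ρ_pos (n : ℕ) : 0 < ρ n := by rw [ρ]; positivity

lemma ρ_anti {a b : ℕ} (h : a ≤ b) : ρ b ≤ ρ a := by
  rw [ρ, ρ]
  apply one_div_le_one_div_of_le (by positivity)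
  have : (a : ℝ) ≤ b := by exact_mod_cast h
  linarith

lemma exists_rho_small {ε : ℝ} (hε : 0 < ε) : ∃ N : ℕ, ∀ n ≥ N, 2 * ρ n < ε := by
  obtain ⟨N, hN⟩ := exists_nat_gt (2 / ε)
  refine ⟨N, fun n hn => ?_⟩
  have h1 : (2 : ℝ) / ε < n + 1 := by
    have : (N : ℝ) ≤ n := by exact_mod_cast hn
    linarith
  have h2 : 2 * ρ n = 2 / (n + 1) := by rw [ρ]; ring
  rw [h2]
  rw [div_lt_iff₀ (by positivity)] at h1 ⊢
  linarith

lemma exists_near (n : ℕ) (x : X) :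
    ∃ j : ℕ, dist x (denseSeq X j) < ρ n :=
  (denseRange_denseSeq X).exists_dist_lt x (ρ_pos n)

/-- index of an element of the dense sequence at distance `< ρ n` from `x` -/
def q (n : ℕ) (x : X) : ℕ := Nat.find (exists_near n x)

lemma dist_q (n : ℕ) (x : X) : dist x (denseSeq X (q n x)) < ρ n :=
  Nat.find_spec (exists_near n x)

lemma measurable_q (n : ℕ) : Measurable (fun x : X => q n x) := by
  apply measurable_to_countable'
  intro j
  have : (fun x : X => q n x) ⁻¹' {j} = Metric.ball (denseSeq X j) (ρ n) ∩
      ⋂ i ∈ Finset.range j, (Metric.ball (denseSeq X i) (ρ n))ᶜ := by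
    ext y
    simp only [mem_preimage, mem_singleton_iff, q, Nat.find_eq_iff, mem_inter_iff,
      mem_iInter, Finset.mem_range, mem_compl_iff, Metric.mem_ball]
  rw [this]
  exact measurableSet_ball.inter (MeasurableSet.biInter (Finset.range j).countable_toSet
    fun i _ => measurableSet_ball.compl)

variable (m : Measure X) [SigmaFinite m]

/-- key encoding the cell of `x` at stage `n` -/
def key (n : ℕ) (x : X) : ℕ :=
  Nat.pair (Encodable.encode (List.ofFn fun t : Fin (n + 1) => q (t : ℕ) x))
    (min (spanningSetsIndex m x) n)

lemma key_eq_iff {n : ℕ} {x y : X} :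
    key m n x = key m n y ↔
      ((∀ t : Fin (n + 1), q (t : ℕ) x = q (t : ℕ) y) ∧
        min (spanningSetsIndex m x) n = min (spanningSetsIndex m y) n) := by
  rw [key, key, Nat.pair_eq_pair, Encodable.encode_inj, List.ofFn_inj, funext_iff]

lemma key_refines {n n' : ℕ} (h : n ≤ n') {x y : X} (hk : key m n' x = key m n' y) :
    key m n x = key m n y := by
  rw [key_eq_iff] at hk ⊢
  obtain ⟨h1, h2⟩ := hk
  constructor
  · intro t
    exact h1 ⟨(t : ℕ), lt_of_lt_of_le t.2 (by omega)⟩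
  · have e1 : min (spanningSetsIndex m x) n = min (min (spanningSetsIndex m x) n') n := by
      rw [min_assoc, min_eq_right h]
    have e2 : min (spanningSetsIndex m y) n = min (min (spanningSetsIndex m y) n') n := by
      rw [min_assoc, min_eq_right h]
    rw [e1, e2, h2]

/-- the cell of `x` at stage `n` -/
def cell (n : ℕ) (x : X) : Set X := {y | key m n y = key m n x}

lemma mem_cell_self (n : ℕ) (x : X) : x ∈ cell m n x := rfl

lemma cell_fiber (n : ℕ) (x : X) : cell m n x = key m n ⁻¹' {key m n x} := rfl

lemma measurable_key (n : ℕ) : Measurable (key m n) := by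
  apply measurable_to_countable
  intro x
  have : key m n ⁻¹' {key m n x} =
      (⋂ t : Fin (n + 1), {y : X | q (t : ℕ) y = q (t : ℕ) x}) ∩
        {y : X | min (spanningSetsIndex m y) n = min (spanningSetsIndex m x) n} := by
    ext y
    simp only [mem_preimage, mem_singleton_iff, mem_inter_iff, mem_iInter, mem_setOf_eq]
    rw [key_eq_iff]
  rw [this]
  refine MeasurableSet.inter (MeasurableSet.iInter fun t => ?_) ?_
  · exact (measurable_q (t : ℕ)) (measurableSet_singleton _)
  · exact ((measurableSet_spanningSetsIndex m).min measurable_const)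
      (measurableSet_singleton _)

lemma measurableSet_cell (n : ℕ) (x : X) : MeasurableSet (cell m n x) :=
  measurable_key m n (measurableSet_singleton _)

lemma cell_subset_ball (n : ℕ) (x : X) : cell m n x ⊆ Metric.ball x (2 * ρ n) := by
  intro y hy
  rw [cell, mem_setOf_eq, key_eq_iff] at hy
  have hq : q n y = q n x := hy.1 ⟨n, by omega⟩
  have d1 := dist_q n x
  have d2 := dist_q n y
  rw [hq] at d2
  rw [Metric.mem_ball]
  calc dist y x ≤ dist y (denseSeq X (q n x)) + dist x (denseSeq X (q n x)) := by
        rw [dist_comm x]; exact dist_triangle _ _ _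
    _ < 2 * ρ n := by linarith

lemma cell_anti {n n' : ℕ} (h : n ≤ n') (x : X) : cell m n' x ⊆ cell m n x :=
  fun _ hy => key_refines m h hy

lemma cell_subset_disjointed {n : ℕ} {x : X} (h : spanningSetsIndex m x < n) :
    cell m n x ⊆ disjointed (spanningSets m) (spanningSetsIndex m x) := by
  intro y hy
  rw [cell, mem_setOf_eq, key_eq_iff] at hy
  have h2 := hy.2
  rw [min_eq_left (le_of_lt h)] at h2
  have hxy : spanningSetsIndex m y = spanningSetsIndex m x := by omega
  rw [← hxy]
  exact mem_disjointed_spanningSetsIndex m y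

/-- eventually the cell of `x` is inside any given neighborhood of `x` -/
lemma eventually_cell_subset {x : X} {U : Set X} (hU : U ∈ 𝓝 x) :
    ∀ᶠ n in atTop, cell m n x ⊆ U := by
  obtain ⟨ε, hε, hball⟩ := Metric.mem_nhds_iff.1 hU
  obtain ⟨N, hN⟩ := exists_rho_small hε
  rw [eventually_atTop]
  exact ⟨N, fun n hn => (cell_subset_ball m n x).trans
    ((Metric.ball_subset_ball (le_of_lt (hN n hn))).trans hball)⟩


/-- functions with finer fibers generate bigger σ-algebras -/
lemma comap_mono_of_refines {f g : X → ℕ} (h : ∀ x y, g x = g y → f x = f y) :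
    MeasurableSpace.comap f ⊤ ≤ MeasurableSpace.comap g ⊤ := by
  classical
  set F : ℕ → ℕ := fun k => if hk : ∃ x, g x = k then f hk.choose else 0 with hF
  have hfg : f = F ∘ g := by
    funext x
    have h1 : ∃ z, g z = g x := ⟨x, rfl⟩
    simp only [hF, Function.comp_apply, dif_pos h1]
    exact (h _ _ h1.choose_spec).symm
  rw [hfg, ← MeasurableSpace.comap_comp]
  exact MeasurableSpace.comap_mono le_top

/-- the filtration generated by the partitions into cells -/
def ℱ : Filtration ℕ (inferInstance : MeasurableSpace X) where
  seq n := MeasurableSpace.comap (key m n) ⊤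
  mono' := by
    intro n n' h
    exact comap_mono_of_refines (fun x y hk => key_refines m h hk)
  le' := by
    intro n s hs
    obtain ⟨T, -, rfl⟩ := hs
    have : key m n ⁻¹' T = ⋃ t ∈ T, key m n ⁻¹' {t} := by
      ext y; simp
    rw [this]
    exact MeasurableSet.biUnion (to_countable T)
      (fun t _ => measurable_key m n (measurableSet_singleton t))

lemma measurableSet_cell_F (n : ℕ) (x : X) : MeasurableSet[(ℱ m) n] (cell m n x) :=
  ⟨{key m n x}, trivial, rfl⟩

lemma iSup_F : (⨆ n, (ℱ m) n) = (inferInstance : MeasurableSpace X) := by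
  apply le_antisymm (iSup_le fun n => (ℱ m).le n)
  refine le_trans (le_of_eq (BorelSpace.measurable_eq (α := X))) ?_
  rw [borel]
  apply MeasurableSpace.generateFrom_le
  intro U hU
  have hUeq : U = ⋃ n, key m n ⁻¹' {t | key m n ⁻¹' {t} ⊆ U} := by
    apply Subset.antisymm
    · intro x hx
      obtain ⟨N, hN⟩ := (eventually_atTop).1
        (eventually_cell_subset m (hU.mem_nhds hx))
      refine mem_iUnion.2 ⟨N, ?_⟩
      simpa only [mem_preimage, mem_setOf_eq, ← cell_fiber] using hN N le_rfl
    · intro x hx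
      obtain ⟨n, hn⟩ := mem_iUnion.1 hx
      exact hn (mem_cell_self m n x)
  rw [hUeq]
  refine MeasurableSet.iUnion fun n => ?_
  exact (le_iSup (fun k => (ℱ m) k) n) _ ⟨_, trivial, rfl⟩

lemma eq_on_cell_of_measurable {n : ℕ} {u : X → ℝ}
    (hu : Measurable[(ℱ m) n] u) {x y : X} (hy : y ∈ cell m n x) : u y = u x := by
  obtain ⟨T, -, hT⟩ := hu (measurableSet_singleton (u x))
  have hx : x ∈ key m n ⁻¹' T := by rw [hT]; exact rfl
  have hk : key m n y = key m n x := hy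
  have hyT : y ∈ key m n ⁻¹' T := by rw [mem_preimage, hk]; exact hx
  have : y ∈ u ⁻¹' {u x} := by rw [← hT]; exact hyT
  exact this

/-- average of `f` over the cell of `x` at stage `n` -/
def avg (f : X → ℝ) (n : ℕ) (x : X) : ℝ :=
  (∫ y in cell m n x, f y ∂m) / (m (cell m n x)).toReal

lemma measurable_avg (f : X → ℝ) (n : ℕ) : Measurable (fun x => avg m f n x) := by
  have : (fun x => avg m f n x) =
      (fun t : ℕ => (∫ y in {z : X | key m n z = t}, f y ∂m) /
        (m {z : X | key m n z = t}).toReal) ∘ (key m n) := rfl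
  rw [this]
  exact measurable_from_top.comp (measurable_key m n)

/-- almost every point has cells of positive measure (w.r.t. any measure) -/
lemma ae_pos_cell (ν : Measure X) : ∀ᵐ x ∂ν, ∀ n, 0 < ν (cell m n x) := by
  rw [ae_all_iff]
  intro n
  have hset : {x : X | ¬ 0 < ν (cell m n x)} =
      ⋃ t ∈ {t : ℕ | ν (key m n ⁻¹' {t}) = 0}, key m n ⁻¹' {t} := by
    ext x
    simp only [mem_setOf_eq, not_lt, le_zero_iff, mem_iUnion, mem_preimage,
      mem_singleton_iff, exists_prop]
    constructor
    · intro hx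
      exact ⟨key m n x, by rw [← cell_fiber]; exact hx, rfl⟩
    · rintro ⟨t, ht, rfl⟩
      rw [cell_fiber]; exact ht
  rw [ae_iff]
  show ν {x : X | ¬ 0 < ν (cell m n x)} = 0
  rw [hset]
  exact (measure_biUnion_null_iff (to_countable _)).2 fun t ht => ht

lemma condexp_cell (μ : Measure X) [IsFiniteMeasure μ] {g : X → ℝ}
    (hg : Integrable g μ) {n : ℕ} {x : X} (hx : μ (cell m n x) ≠ 0) :
    (μ[g | (ℱ m) n]) x = (∫ y in cell m n x, g y ∂μ) / (μ (cell m n x)).toReal := by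
  have hle : (ℱ m) n ≤ (inferInstance : MeasurableSpace X) := (ℱ m).le n
  have hconst : ∀ y ∈ cell m n x, (μ[g|(ℱ m) n]) y = (μ[g|(ℱ m) n]) x :=
    fun y hy => eq_on_cell_of_measurable m (stronglyMeasurable_condExp.measurable) hy
  have h1 : ∫ y in cell m n x, (μ[g|(ℱ m) n]) y ∂μ = ∫ y in cell m n x, g y ∂μ :=
    setIntegral_condExp hle hg (measurableSet_cell_F m n x)
  have h2 : ∫ y in cell m n x, (μ[g|(ℱ m) n]) y ∂μ
      = (μ (cell m n x)).toReal * (μ[g|(ℱ m) n]) x := by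
    rw [setIntegral_congr_fun (measurableSet_cell m n x) hconst, setIntegral_const,
      smul_eq_mul, measureReal_def]
  have htR : (μ (cell m n x)).toReal ≠ 0 :=
    ENNReal.toReal_ne_zero.2 ⟨hx, measure_ne_top μ _⟩
  rw [← h1, h2, mul_comm, mul_div_assoc, div_self htR, mul_one]


lemma key_convergence {b : Set X} (hb : IsOpen b) {f : X → ℝ} (hf : Measurable f)
    (hbint : IntegrableOn f b m) (j : ℕ) :
    ∀ᵐ x ∂m, x ∈ disjointed (spanningSets m) j → x ∈ b →
      Tendsto (fun n => avg m f n x) atTop (𝓝 (f x)) := by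
  set Dj := disjointed (spanningSets m) j with hDj
  have hDjm : MeasurableSet Dj :=
    MeasurableSet.disjointed (fun i => measurableSet_spanningSets m i) j
  set μ := m.restrict Dj with hμ
  haveI : IsFiniteMeasure μ := ⟨by
    rw [hμ, Measure.restrict_apply_univ]
    exact lt_of_le_of_lt (measure_mono (disjointed_subset _ _))
      (measure_spanningSets_lt_top m j)⟩
  set g := (b ∩ Dj).indicator f with hg
  have hgmeas : Measurable g := hf.indicator (hb.measurableSet.inter hDjm)
  have hgint : Integrable g μ :=
    ((integrable_indicator_iff (hb.measurableSet.inter hDjm)).2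
      (hbint.mono_set inter_subset_left)).restrict
  have hgSM : StronglyMeasurable[⨆ n, (ℱ m) n] g := by
    rw [iSup_F m]
    exact hgmeas.stronglyMeasurable
  have hlevy := hgint.tendsto_ae_condExp hgSM
  have hpos := ae_pos_cell m μ
  have hmem : ∀ᵐ x ∂μ, x ∈ Dj := ae_restrict_mem hDjm
  have main : ∀ᵐ x ∂μ, x ∈ b → Tendsto (fun n => avg m f n x) atTop (𝓝 (f x)) := by
    filter_upwards [hlevy, hpos, hmem] with x h1 h2 hxD hxb
    have hgx : g x = f x := indicator_of_mem (mem_inter hxb hxD) f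
    have hjx : spanningSetsIndex m x = j := (spanningSetsIndex_eq_iff m).2 hxD
    have hev : ∀ᶠ n in atTop, avg m f n x = (μ[g | (ℱ m) n]) x := by
      have hev1 : ∀ᶠ n in atTop, cell m n x ⊆ b :=
        eventually_cell_subset m (hb.mem_nhds hxb)
      have hev2 : ∀ᶠ n in atTop, cell m n x ⊆ Dj := by
        rw [eventually_atTop]
        refine ⟨j + 1, fun n hn => ?_⟩
        have := cell_subset_disjointed m (x := x) (n := n) (by omega)
        rwa [hjx] at this
      filter_upwards [hev1, hev2] with n hnb hnD
      have hcm : μ (cell m n x) = m (cell m n x) := by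
        rw [hμ, Measure.restrict_apply (measurableSet_cell m n x), inter_eq_left.2 hnD]
      have hint : ∫ y in cell m n x, g y ∂μ = ∫ y in cell m n x, f y ∂m := by
        rw [hμ, Measure.restrict_restrict (measurableSet_cell m n x), inter_eq_left.2 hnD]
        exact setIntegral_congr_fun (measurableSet_cell m n x)
          (fun y hy => indicator_of_mem (mem_inter (hnb hy) (hnD hy)) f)
      rw [condexp_cell m μ hgint (h2 n).ne', avg, hint, hcm]
    rw [hgx] at h1
    exact Tendsto.congr' (hev.mono fun n h => h.symm) h1
  have := (ae_restrict_iff' hDjm).1 main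
  filter_upwards [this] with x hx hxD hxb
  exact hx hxD hxb

lemma tendsto_avg {f : X → ℝ} (hf : Measurable f) (hloc : LocallyIntegrable f m) :
    ∀ᵐ x ∂m, Tendsto (fun n => avg m f n x) atTop (𝓝 (f x)) := by
  classical
  haveI : SecondCountableTopology X := UniformSpace.secondCountable_of_separable X
  set V : Set (Set X) := {s ∈ countableBasis X | IntegrableOn f s m} with hV
  have hVc : V.Countable := (countable_countableBasis X).mono (sep_subset _ _)
  have hcover : ∀ x : X, ∃ s ∈ V, x ∈ s := by
    intro x
    obtain ⟨s, hs, hint⟩ := hloc x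
    obtain ⟨t, htB, hxt, hts⟩ := (isBasis_countableBasis X).mem_nhds_iff.1 hs
    exact ⟨t, ⟨htB, hint.mono_set hts⟩, hxt⟩
  have H : ∀ᵐ x ∂m, ∀ s ∈ V, ∀ j : ℕ, x ∈ disjointed (spanningSets m) j → x ∈ s →
      Tendsto (fun n => avg m f n x) atTop (𝓝 (f x)) := by
    rw [ae_ball_iff hVc]
    intro s hs
    rw [ae_all_iff]
    intro j
    exact key_convergence m (isOpen_of_mem_countableBasis hs.1) hf hs.2 j
  filter_upwards [H] with x hx
  obtain ⟨s, hsV, hxs⟩ := hcover x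
  exact hx s hsV (spanningSetsIndex m x) (mem_disjointed_spanningSetsIndex m x) hxs

lemma eventually_good {f : X → ℝ} (hloc : LocallyIntegrable f m) :
    ∀ᵐ x ∂m, ∀ᶠ n in atTop,
      0 < m (cell m n x) ∧ m (cell m n x) < ⊤ ∧ IntegrableOn f (cell m n x) m := by
  filter_upwards [ae_pos_cell m m] with x hx
  obtain ⟨s, hs, hint⟩ := hloc x
  have h1 : ∀ᶠ n in atTop, cell m n x ⊆ s := eventually_cell_subset m hs
  have h2 : ∀ᶠ n in atTop,
      cell m n x ⊆ disjointed (spanningSets m) (spanningSetsIndex m x) :=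
    eventually_atTop.2 ⟨spanningSetsIndex m x + 1,
      fun n hn => cell_subset_disjointed m (by omega)⟩
  filter_upwards [h1, h2] with n hn1 hn2
  refine ⟨hx n, ?_, hint.mono_set hn1⟩
  exact lt_of_le_of_lt (measure_mono (hn2.trans (disjointed_subset _ _)))
    (measure_spanningSets_lt_top m _)


/-- the set of Lebesgue points -/
def LebSet (f : X → ℝ) : Set X :=
  {x | (∀ᶠ n in atTop, 0 < m (cell m n x) ∧ m (cell m n x) < ⊤ ∧
      IntegrableOn f (cell m n x) m) ∧
    ∃ c, Tendsto (fun n => avg m f n x) atTop (𝓝 c)}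

/-- the chosen representative -/
def rep (f : X → ℝ) : X → ℝ :=
  (LebSet m f).indicator fun x => limUnder atTop (fun n => avg m f n x)

lemma measurableSet_LebSet (f : X → ℝ) : MeasurableSet (LebSet m f) := by
  have hS : ∀ n : ℕ, MeasurableSet {x : X | 0 < m (cell m n x) ∧ m (cell m n x) < ⊤ ∧
      IntegrableOn f (cell m n x) m} := by
    intro n
    have : {x : X | 0 < m (cell m n x) ∧ m (cell m n x) < ⊤ ∧
        IntegrableOn f (cell m n x) m} =
        (key m n) ⁻¹' {t : ℕ | 0 < m {y : X | key m n y = t} ∧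
          m {y : X | key m n y = t} < ⊤ ∧ IntegrableOn f {y : X | key m n y = t} m} := rfl
    rw [this]
    exact measurable_key m n MeasurableSpace.measurableSet_top
  have h1 : MeasurableSet {x : X | ∀ᶠ n in atTop, 0 < m (cell m n x) ∧
      m (cell m n x) < ⊤ ∧ IntegrableOn f (cell m n x) m} := by
    have : {x : X | ∀ᶠ n in atTop, 0 < m (cell m n x) ∧ m (cell m n x) < ⊤ ∧
        IntegrableOn f (cell m n x) m} =
        ⋃ N : ℕ, ⋂ n : ℕ, ⋂ (_ : N ≤ n), {x : X | 0 < m (cell m n x) ∧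
          m (cell m n x) < ⊤ ∧ IntegrableOn f (cell m n x) m} := by
      ext x
      simp only [mem_setOf_eq, eventually_atTop, mem_iUnion, mem_iInter]
    rw [this]
    exact MeasurableSet.iUnion fun N => MeasurableSet.iInter fun n =>
      MeasurableSet.iInter fun _ => hS n
  have h2 : MeasurableSet {x : X | ∃ c, Tendsto (fun n => avg m f n x) atTop (𝓝 c)} :=
    measurableSet_exists_tendsto (fun n => measurable_avg m f n)
  exact h1.inter h2

lemma tendsto_avg_rep {f : X → ℝ} {x : X} (hx : x ∈ LebSet m f) :
    Tendsto (fun n => avg m f n x) atTop (𝓝 (rep m f x)) := by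
  obtain ⟨c, hc⟩ := hx.2
  rw [rep, indicator_of_mem hx, hc.limUnder_eq]
  exact hc

lemma measurable_rep {f : X → ℝ} : Measurable (rep m f) := by
  apply measurable_of_tendsto_metrizable
    (f := fun n => (LebSet m f).indicator (fun x => avg m f n x))
  · exact fun n => (measurable_avg m f n).indicator (measurableSet_LebSet m f)
  · rw [tendsto_pi_nhds]
    intro x
    by_cases hx : x ∈ LebSet m f
    · simp only [indicator_of_mem hx]
      exact tendsto_avg_rep m hx
    · simp only [indicator_of_notMem hx, rep]
      exact tendsto_const_nhds

lemma ae_mem_LebSet {f : X → ℝ} (hf : Measurable f) (hloc : LocallyIntegrable f m) :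
    ∀ᵐ x ∂m, x ∈ LebSet m f := by
  filter_upwards [tendsto_avg m hf hloc, eventually_good m hloc] with x h1 h2
  exact ⟨h2, f x, h1⟩

lemma rep_ae_eq {f : X → ℝ} (hf : Measurable f) (hloc : LocallyIntegrable f m) :
    rep m f =ᵐ[m] f := by
  filter_upwards [tendsto_avg m hf hloc, ae_mem_LebSet m hf hloc] with x h1 hx
  exact tendsto_nhds_unique (tendsto_avg_rep m hx) h1

lemma avg_congr {f g : X → ℝ} (hfg : f =ᵐ[m] g) (n : ℕ) (x : X) :
    avg m f n x = avg m g n x := by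
  rw [avg, avg, integral_congr_ae (ae_restrict_of_ae hfg)]

lemma LebSet_congr {f g : X → ℝ} (hfg : f =ᵐ[m] g) : LebSet m f = LebSet m g := by
  have hint : ∀ n (x : X), IntegrableOn f (cell m n x) m ↔ IntegrableOn g (cell m n x) m :=
    fun n x => ⟨fun h => h.congr (ae_restrict_of_ae hfg),
      fun h => h.congr (ae_restrict_of_ae hfg.symm)⟩
  ext x
  simp only [LebSet, mem_setOf_eq]
  constructor
  · rintro ⟨h1, c, hc⟩
    refine ⟨h1.mono fun n hn => ⟨hn.1, hn.2.1, (hint n x).1 hn.2.2⟩, c, ?_⟩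
    exact hc.congr (fun n => avg_congr m hfg n x)
  · rintro ⟨h1, c, hc⟩
    refine ⟨h1.mono fun n hn => ⟨hn.1, hn.2.1, (hint n x).2 hn.2.2⟩, c, ?_⟩
    exact hc.congr (fun n => (avg_congr m hfg n x).symm)

lemma rep_congr {f g : X → ℝ} (hfg : f =ᵐ[m] g) : rep m f = rep m g := by
  have h1 := LebSet_congr m hfg
  funext x
  rw [rep, rep, h1]
  congr 1
  funext y
  rw [funext (fun n => avg_congr m hfg n y)]

lemma rep_bound {f : X → ℝ} {x : X} (hx : x ∈ LebSet m f) {r : ℝ} (hr : 0 < r) :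
    (‖rep m f x‖₊ : ℝ≥0∞) ≤ eLpNormEssSup f (m.restrict (Metric.ball x r)) := by
  set L := eLpNormEssSup f (m.restrict (Metric.ball x r)) with hLdef
  by_cases hL : L = ⊤
  · rw [hL]; exact le_top
  have hb : ∀ᵐ y ∂(m.restrict (Metric.ball x r)), (‖f y‖₊ : ℝ≥0∞) ≤ L :=
    ae_le_eLpNormEssSup
  have hbound : ∀ᶠ n in atTop, |avg m f n x| ≤ L.toReal := by
    filter_upwards [hx.1, eventually_cell_subset m (Metric.ball_mem_nhds x hr)]
      with n hgood hsub
    obtain ⟨hpos, hfin, hint⟩ := hgood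
    have hae : ∀ᵐ y ∂(m.restrict (cell m n x)), ‖f y‖ ≤ L.toReal := by
      filter_upwards [ae_restrict_of_ae_restrict_of_subset hsub hb] with y hy
      have h1 : ((‖f y‖₊ : ℝ≥0∞)).toReal ≤ L.toReal := ENNReal.toReal_mono hL hy
      simpa using h1
    have h2 : |∫ y in cell m n x, f y ∂m| ≤ ∫ y in cell m n x, ‖f y‖ ∂m := by
      rw [← Real.norm_eq_abs]
      exact norm_integral_le_integral_norm f
    have h3 : ∫ y in cell m n x, ‖f y‖ ∂m ≤ ∫ _ in cell m n x, L.toReal ∂m :=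
      integral_mono_ae hint.norm (integrableOn_const hfin.ne) hae
    rw [setIntegral_const, smul_eq_mul, measureReal_def] at h3
    have hMpos : 0 < (m (cell m n x)).toReal := ENNReal.toReal_pos hpos.ne' hfin.ne
    rw [avg, abs_div, abs_of_nonneg ENNReal.toReal_nonneg, div_le_iff₀ hMpos]
    calc |∫ y in cell m n x, f y ∂m| ≤ (m (cell m n x)).toReal * L.toReal := by linarith
      _ = L.toReal * (m (cell m n x)).toReal := by ring
  have habs : |rep m f x| ≤ L.toReal :=
    le_of_tendsto (tendsto_avg_rep m hx).abs hbound
  calc (‖rep m f x‖₊ : ℝ≥0∞) = ENNReal.ofReal ‖rep m f x‖ :=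
        (ofReal_norm _).symm
    _ ≤ ENNReal.ofReal L.toReal := ENNReal.ofReal_le_ofReal (by rwa [Real.norm_eq_abs])
    _ = L := ENNReal.ofReal_toReal hL

lemma LebSet_linear {f g : X → ℝ} (α β : ℝ) {x : X}
    (hxf : x ∈ LebSet m f) (hxg : x ∈ LebSet m g) :
    x ∈ LebSet m (fun y => α * f y + β * g y) ∧
      rep m (fun y => α * f y + β * g y) x = α * rep m f x + β * rep m g x := by
  have heq : ∀ᶠ n in atTop, avg m (fun y => α * f y + β * g y) n x
      = α * avg m f n x + β * avg m g n x := by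
    filter_upwards [hxf.1, hxg.1] with n h1 h2
    rw [avg, avg, avg, integral_add (h1.2.2.const_mul α) (h2.2.2.const_mul β),
      integral_const_mul, integral_const_mul, add_div, mul_div_assoc, mul_div_assoc]
  have hlim : Tendsto (fun n => avg m (fun y => α * f y + β * g y) n x) atTop
      (𝓝 (α * rep m f x + β * rep m g x)) := by
    refine Tendsto.congr' (EventuallyEq.symm heq) ?_
    exact ((tendsto_avg_rep m hxf).const_mul α).add ((tendsto_avg_rep m hxg).const_mul β)
  have hmem : x ∈ LebSet m (fun y => α * f y + β * g y) := by
    constructor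
    · filter_upwards [hxf.1, hxg.1] with n h1 h2
      exact ⟨h1.1, h1.2.1, (h1.2.2.const_mul α).add (h2.2.2.const_mul β)⟩
    · exact ⟨_, hlim⟩
  exact ⟨hmem, tendsto_nhds_unique (tendsto_avg_rep m hmem) hlim⟩

end Statement19Aux

end

noncomputable section

open Statement19Aux

/-- linear choice of Borel representatives on Polish spaces: for a
σ-finite Borel measure `m` on a complete separable metric space `X` there are maps
`Leb` and `BorRep` on the `m`-locally integrable Borel functions such that: (0) they
only depend on the a.e.-class; (i) `Leb f` is Borel of full measure; (ii) `BorRep f` is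
a Borel representative of `f`; (iii) they are pointwise linear on `Leb f ∩ Leb g`;
(iv) `|BorRep f x| ≤ inf_{r>0} ‖f‖_{L^∞(m|B_r(x))}` for `x ∈ Leb f`. -/
theorem statement19 {X : Type*} [MetricSpace X] [CompleteSpace X]
    [TopologicalSpace.SeparableSpace X] [MeasurableSpace X] [BorelSpace X]
    (m : Measure X) [SigmaFinite m] :
    ∃ (Leb : (X → ℝ) → Set X) (BorRep : (X → ℝ) → X → ℝ),
      -- (0) dependence only on the a.e.-class
      (∀ f g : X → ℝ, Measurable f → LocallyIntegrable f m →
        Measurable g → LocallyIntegrable g m → f =ᵐ[m] g →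
        Leb f = Leb g ∧ BorRep f = BorRep g) ∧
      (∀ f : X → ℝ, Measurable f → LocallyIntegrable f m →
        MeasurableSet (Leb f) ∧ Measurable (BorRep f) ∧
        -- (i)
        m (Leb f)ᶜ = 0 ∧
        -- (ii)
        BorRep f =ᵐ[m] f ∧
        -- (iv)
        ∀ x ∈ Leb f, (‖BorRep f x‖₊ : ℝ≥0∞) ≤
          ⨅ (r : ℝ) (_ : 0 < r), eLpNormEssSup f (m.restrict (Metric.ball x r))) ∧
      -- (iii)
      ∀ (f g : X → ℝ) (α β : ℝ), Measurable f → LocallyIntegrable f m →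
        Measurable g → LocallyIntegrable g m →
        Leb f ∩ Leb g ⊆ Leb (fun x => α * f x + β * g x) ∧
        ∀ x ∈ Leb f ∩ Leb g,
          BorRep (fun y => α * f y + β * g y) x = α * BorRep f x + β * BorRep g x := by
  rcases isEmpty_or_nonempty X with hX | hX
  · refine ⟨fun _ => Set.univ, fun _ _ => 0, ?_, ?_, ?_⟩
    · intro f g _ _ _ _ _
      exact ⟨rfl, rfl⟩
    · intro f _ _
      refine ⟨MeasurableSet.univ, measurable_const, ?_, ?_, ?_⟩
      · rw [Set.compl_univ]; exact measure_empty
      · exact Filter.Eventually.of_forall fun x => isEmptyElim x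
      · intro x _; exact isEmptyElim x
    · intro f g α β _ _ _ _
      exact ⟨Set.subset_univ _, fun x _ => isEmptyElim x⟩
  · refine ⟨LebSet m, rep m, ?_, ?_, ?_⟩
    · intro f g _ _ _ _ hfg
      exact ⟨LebSet_congr m hfg, rep_congr m hfg⟩
    · intro f hf hloc
      refine ⟨measurableSet_LebSet m f, measurable_rep m, ?_, rep_ae_eq m hf hloc, ?_⟩
      · have h := ae_mem_LebSet m hf hloc
        rw [MeasureTheory.ae_iff] at h
        exact h
      · intro x hx
        exact le_iInf fun r => le_iInf fun hr => rep_bound m hx hr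
    · intro f g α β hf hlocf hg hlocg
      constructor
      · rintro x ⟨hxf, hxg⟩
        exact (LebSet_linear m α β hxf hxg).1
      · rintro x ⟨hxf, hxg⟩
        exact (LebSet_linear m α β hxf hxg).2

end
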